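/- arXiv:2302.05529 — 2 statements merged into one kernel-verified Lean document; each statement's English description precedes it below -/
import Mathlib

section
/- For every α ∈ ℂ there is an isomorphism of Ū-modules V_α^∨ ≅ V_{−α}, where V_α^∨ = Hom_ℂ(V_α, ℂ) carries the antipode-twisted dual action (x·f)(v) = f(S(x)v). -/
noncomputable section

open scoped TensorProduct

namespace Unrolled

/-- `q^z = exp(π √-1 z / r)`. -/
def qc (r : ℕ) (z : ℂ) : ℂ := Complex.exp (Real.pi * Complex.I * z / r)

/-- `{z} = q^z - q^{-z}`. -/
def qbrk (r : ℕ) (z : ℂ) : ℂ := qc r z - qc r (-z)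

/-- `[z] = {z}/{1}`. -/
def qint (r : ℕ) (z : ℂ) : ℂ := qbrk r z / qbrk r 1

/-- `{n}! = ∏_{i=1}^n {i}`. -/
def qbrkFact (r n : ℕ) : ℂ := ∏ i ∈ Finset.range n, qbrk r ((i : ℂ) + 1)

/-- `[n]! = ∏_{i=1}^n [i]`. -/
def qintFact (r n : ℕ) : ℂ := ∏ i ∈ Finset.range n, qint r ((i : ℂ) + 1)

/-- The data of five operators `K, K⁻¹, H, E, F` on a complex vector space. -/
structure Ops (V : Type) [AddCommGroup V] [Module ℂ V] where
  K : Module.End ℂ V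
  Kinv : Module.End ℂ V
  H : Module.End ℂ V
  E : Module.End ℂ V
  F : Module.End ℂ V

/-- A module over the restricted unrolled quantum group `Ū = Ū_q^H(sl₂(ℂ))`:
five operators satisfying the defining relations of `Ū`. -/
structure Rep (r : ℕ) (V : Type) [AddCommGroup V] [Module ℂ V] extends Ops V where
  rel_KKinv : K * Kinv = 1
  rel_KinvK : Kinv * K = 1
  rel_HK : H * K = K * H
  rel_HE : H * E - E * H = (2 : ℂ) • E
  rel_HF : H * F - F * H = (-2 : ℂ) • F
  rel_KE : K * E = qc r 2 • (E * K)
  rel_KF : K * F = qc r (-2) • (F * K)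
  rel_EF : E * F - F * E = (qbrk r 1)⁻¹ • (K - Kinv)
  rel_Er : E ^ r = 0
  rel_Fr : F ^ r = 0

variable {V W U : Type} [AddCommGroup V] [Module ℂ V] [AddCommGroup W] [Module ℂ W]
  [AddCommGroup U] [Module ℂ U]

/-- A `Ū`-submodule: a subspace invariant under the five operators. -/
def Ops.Invariant (A : Ops V) (p : Submodule ℂ V) : Prop :=
  (∀ v ∈ p, A.K v ∈ p) ∧ (∀ v ∈ p, A.Kinv v ∈ p) ∧ (∀ v ∈ p, A.H v ∈ p) ∧
    (∀ v ∈ p, A.E v ∈ p) ∧ (∀ v ∈ p, A.F v ∈ p)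

/-- A simple `Ū`-module: nonzero, with no nonzero proper invariant subspace. -/
def Ops.IsSimple (A : Ops V) : Prop :=
  (∃ v : V, v ≠ 0) ∧ ∀ p : Submodule ℂ V, A.Invariant p → p = ⊥ ∨ p = ⊤

/-- A weight module: finite dimensional, a direct sum of `H`-eigenspaces, on which `K`
acts by `q^μ` on the `H`-eigenspace of eigenvalue `μ`. -/
structure IsWeight (r : ℕ) {V : Type} [AddCommGroup V] [Module ℂ V] (A : Ops V) : Prop where
  finDim : FiniteDimensional ℂ V
  sup_eigenspaces : (⨆ μ : ℂ, Module.End.eigenspace A.H μ) = ⊤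
  K_apply : ∀ (μ : ℂ), ∀ v ∈ Module.End.eigenspace A.H μ, A.K v = qc r μ • v

/-- A `Ū`-linear map. -/
def IsEquivariant (A : Ops V) (B : Ops W) (f : V →ₗ[ℂ] W) : Prop :=
  (∀ v, f (A.K v) = B.K (f v)) ∧ (∀ v, f (A.Kinv v) = B.Kinv (f v)) ∧
    (∀ v, f (A.H v) = B.H (f v)) ∧ (∀ v, f (A.E v) = B.E (f v)) ∧
    (∀ v, f (A.F v) = B.F (f v))

/-- Isomorphism of `Ū`-modules. -/
def OpsIso (A : Ops V) (B : Ops W) : Prop :=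
  ∃ e : V ≃ₗ[ℂ] W, IsEquivariant A B (e : V →ₗ[ℂ] W)

/-- The weight `α + r - 1 - 2i` of the basis vector `v_i` of the Verma module `V_α`. -/
def wt (r : ℕ) (α : ℂ) (i : ℕ) : ℂ := α + r - 1 - 2 * i

/-- The coefficient `{i}{i-α}/{1}²` occurring in `E v_i`. -/
def cE (r : ℕ) (α : ℂ) (i : ℕ) : ℂ := qbrk r i * qbrk r ((i : ℂ) - α) / qbrk r 1 ^ 2

/-- The Verma module `V_α` of highest weight `α + r - 1`, realized on `Fin r → ℂ`
with basis `v_0, …, v_{r-1}`. -/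
def vermaOps (r : ℕ) (α : ℂ) : Ops (Fin r → ℂ) where
  K := (Matrix.diagonal fun i : Fin r => qc r (wt r α (i : ℕ))).mulVecLin
  Kinv := (Matrix.diagonal fun i : Fin r => qc r (-wt r α (i : ℕ))).mulVecLin
  H := (Matrix.diagonal fun i : Fin r => wt r α (i : ℕ)).mulVecLin
  E := (Matrix.of fun i j : Fin r =>
    if (j : ℕ) = (i : ℕ) + 1 then cE r α (j : ℕ) else 0).mulVecLin
  F := (Matrix.of fun i j : Fin r =>
    if (i : ℕ) = (j : ℕ) + 1 then (1 : ℂ) else 0).mulVecLin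

/-- `α_{l,n} = (l-1)r + n + 1`, so that `S_n^{lr}` is a quotient of `V_{α_{l,n}}`. -/
def aln (r : ℕ) (l : ℤ) (n : ℕ) : ℂ := ((l : ℂ) - 1) * r + n + 1

/-- The simple module `S_n^{lr}` of highest weight `lr + n` and dimension `n+1`,
realized on `Fin (n+1) → ℂ`. -/
def smodOps (r : ℕ) (l : ℤ) (n : ℕ) : Ops (Fin (n + 1) → ℂ) where
  K := (Matrix.diagonal fun i : Fin (n + 1) => qc r (wt r (aln r l n) (i : ℕ))).mulVecLin
  Kinv := (Matrix.diagonal fun i : Fin (n + 1) => qc r (-wt r (aln r l n) (i : ℕ))).mulVecLin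
  H := (Matrix.diagonal fun i : Fin (n + 1) => wt r (aln r l n) (i : ℕ)).mulVecLin
  E := (Matrix.of fun i j : Fin (n + 1) =>
    if (j : ℕ) = (i : ℕ) + 1 then cE r (aln r l n) (j : ℕ) else 0).mulVecLin
  F := (Matrix.of fun i j : Fin (n + 1) =>
    if (i : ℕ) = (j : ℕ) + 1 then (1 : ℂ) else 0).mulVecLin

/-- `α ∈ (ℂ∖ℤ) ∪ rℤ`. -/
def goodα (r : ℕ) (α : ℂ) : Prop := (¬∃ n : ℤ, α = (n : ℂ)) ∨ ∃ m : ℤ, α = (r : ℂ) * m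

/-- The antipode-twisted dual `Ū`-module structure on `V_α^∨ = Hom_ℂ(V_α, ℂ)`,
given by `(x · f)(v) = f (S(x) v)` with `S(K) = K⁻¹`, `S(K⁻¹) = K`, `S(H) = -H`,
`S(E) = -EK⁻¹` and `S(F) = -KF`. -/
def vermaDualOps (r : ℕ) (α : ℂ) : Ops (Module.Dual ℂ (Fin r → ℂ)) where
  K := ((vermaOps r α).Kinv).dualMap
  Kinv := ((vermaOps r α).K).dualMap
  H := (-(vermaOps r α).H).dualMap
  E := (-((vermaOps r α).E * (vermaOps r α).Kinv)).dualMap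
  F := (-((vermaOps r α).K * (vermaOps r α).F)).dualMap


/-! ### Auxiliary machinery for `stmt2` -/

open scoped Matrix

section Stmt2Aux

lemma qc_ne_zero' (r : ℕ) (z : ℂ) : qc r z ≠ 0 := Complex.exp_ne_zero _

lemma qc_add' (r : ℕ) (y z : ℂ) : qc r (y + z) = qc r y * qc r z := by
  unfold qc; rw [← Complex.exp_add]; congr 1; ring

lemma qc_zero' (r : ℕ) : qc r 0 = 1 := by unfold qc; simp

lemma qc_mul_neg' (r : ℕ) (z : ℂ) : qc r z * qc r (-z) = 1 := by
  rw [← qc_add']; simp [qc_zero']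

lemma qc_nat_r' (r : ℕ) (hr : r ≠ 0) : qc r (r : ℂ) = -1 := by
  unfold qc
  rw [mul_div_assoc, div_self (by exact_mod_cast hr), mul_one]
  exact Complex.exp_pi_mul_I

lemma qc_neg_nat_r' (r : ℕ) (hr : r ≠ 0) : qc r (-(r : ℂ)) = -1 := by
  have h := qc_mul_neg' r (r : ℂ)
  rw [qc_nat_r' r hr] at h
  linear_combination -h

lemma qbrk_neg' (r : ℕ) (z : ℂ) : qbrk r (-z) = -qbrk r z := by
  unfold qbrk; rw [neg_neg]; ring

lemma qbrk_add_r' (r : ℕ) (hr : r ≠ 0) (z : ℂ) : qbrk r (z + r) = -qbrk r z := by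
  unfold qbrk
  have h1 : qc r (z + r) = qc r z * qc r (r : ℂ) := qc_add' r z r
  have h2 : qc r (-(z + (r:ℂ))) = qc r (-z) * qc r (-(r:ℂ)) := by
    rw [← qc_add']; ring_nf
  rw [h1, h2, qc_nat_r' r hr, qc_neg_nat_r' r hr]; ring

lemma cE_symm' (r : ℕ) (α : ℂ) (hr : r ≠ 0) {i j : ℕ} (h : i + j + 2 = r) :
    cE r α (i + 1) = cE r (-α) (j + 1) := by
  have hc : ((i : ℂ)) + j + 2 = r := by exact_mod_cast h
  unfold cE
  push_cast
  have e1 : qbrk r ((i : ℂ) + 1) = qbrk r ((j : ℂ) + 1) := by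
    have hz : ((i : ℂ) + 1) = -((j : ℂ) + 1) + r := by linear_combination hc
    rw [hz, qbrk_add_r' r hr, qbrk_neg']; ring
  have e2 : qbrk r ((i : ℂ) + 1 - α) = qbrk r ((j : ℂ) + 1 - -α) := by
    have hz : ((i : ℂ) + 1 - α) = -((j : ℂ) + 1 - -α) + r := by linear_combination hc
    rw [hz, qbrk_add_r' r hr, qbrk_neg']; ring
  rw [e1, e2]

/-- Coefficients of the iso `V_α^∨ ≅ V_{-α}`. -/
def ccc (r : ℕ) (α : ℂ) (n : ℕ) : ℂ := ∏ k ∈ Finset.range n, -qc r (wt r α (k + 1))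

lemma ccc_succ (r : ℕ) (α : ℂ) (n : ℕ) :
    ccc r α (n + 1) = ccc r α n * -qc r (wt r α (n + 1)) := Finset.prod_range_succ _ _

lemma ccc_ne_zero (r : ℕ) (α : ℂ) (n : ℕ) : ccc r α n ≠ 0 :=
  Finset.prod_ne_zero_iff.2 fun _ _ => neg_ne_zero.2 (qc_ne_zero' r _)

lemma wt_rev' (r : ℕ) (α : ℂ) (i : Fin r) :
    wt r (-α) ((Fin.rev i : Fin r) : ℕ) = -wt r α (i : ℕ) := by
  unfold wt
  rw [Fin.val_rev, Nat.cast_sub (by omega : (i : ℕ) + 1 ≤ r)]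
  push_cast
  ring

/-- The matrix of the iso in the dual basis. -/
def PMx (r : ℕ) (α : ℂ) : Matrix (Fin r) (Fin r) ℂ :=
  Matrix.of fun j i => if i = Fin.rev j then ccc r α (i : ℕ) else 0

/-- Its inverse. -/
def QMx (r : ℕ) (α : ℂ) : Matrix (Fin r) (Fin r) ℂ :=
  Matrix.of fun j i => if i = Fin.rev j then (ccc r α (j : ℕ))⁻¹ else 0

lemma rev_cond (r : ℕ) (i x : Fin r) : (i = Fin.rev x) ↔ (x = Fin.rev i) := by
  constructor <;> rintro rfl <;> simp

lemma PMx_mul_entry (r : ℕ) (α : ℂ) (M : Matrix (Fin r) (Fin r) ℂ) (j i : Fin r) :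
    (PMx r α * Mᵀ) j i = ccc r α ((Fin.rev j : Fin r) : ℕ) * M i (Fin.rev j) := by
  simp only [Matrix.mul_apply, PMx, Matrix.of_apply, Matrix.transpose_apply, ite_mul, zero_mul]
  rw [Finset.sum_ite_eq']
  simp

lemma mul_PMx_entry (r : ℕ) (α : ℂ) (N : Matrix (Fin r) (Fin r) ℂ) (j i : Fin r) :
    (N * PMx r α) j i = N j (Fin.rev i) * ccc r α (i : ℕ) := by
  simp only [Matrix.mul_apply, PMx, Matrix.of_apply, rev_cond, mul_ite, mul_zero]
  rw [Finset.sum_ite_eq']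
  simp

lemma PMx_mul_QMx (r : ℕ) (α : ℂ) : PMx r α * QMx r α = 1 := by
  ext j i
  simp only [Matrix.mul_apply, PMx, QMx, Matrix.of_apply, ite_mul, zero_mul]
  rw [Finset.sum_ite_eq']
  simp only [Finset.mem_univ, if_true, Fin.rev_rev]
  rw [Matrix.one_apply]
  by_cases h : i = j
  · subst h
    rw [if_pos rfl, if_pos rfl]
    exact mul_inv_cancel₀ (ccc_ne_zero r α _)
  · rw [if_neg h, if_neg (fun hc : j = i => h hc.symm), mul_zero]

lemma QMx_mul_PMx (r : ℕ) (α : ℂ) : QMx r α * PMx r α = 1 := by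
  ext j i
  simp only [Matrix.mul_apply, QMx, PMx, Matrix.of_apply, ite_mul, zero_mul]
  rw [Finset.sum_ite_eq']
  simp only [Finset.mem_univ, if_true, Fin.rev_rev]
  rw [Matrix.one_apply]
  by_cases h : i = j
  · subst h
    rw [if_pos rfl, if_pos rfl]
    exact inv_mul_cancel₀ (ccc_ne_zero r α _)
  · rw [if_neg h, if_neg (fun hc : j = i => h hc.symm), mul_zero]

/-- Coordinates of a dual vector. -/
def coordL (r : ℕ) : Module.Dual ℂ (Fin r → ℂ) →ₗ[ℂ] (Fin r → ℂ) where
  toFun f := fun i => f (Pi.single i 1)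
  map_add' f g := by funext i; simp
  map_smul' c f := by funext i; simp

/-- A vector as a dual functional. -/
def dualOf (r : ℕ) : (Fin r → ℂ) →ₗ[ℂ] Module.Dual ℂ (Fin r → ℂ) where
  toFun w :=
    { toFun := fun v => ∑ i, w i * v i
      map_add' := fun v u => by simp [mul_add, Finset.sum_add_distrib]
      map_smul' := fun c v => by
        simp only [Pi.smul_apply, smul_eq_mul, RingHom.id_apply, Finset.mul_sum]
        exact Finset.sum_congr rfl fun i _ => by ring }
  map_add' w u := by
    refine LinearMap.ext fun v => ?_
    simp only [LinearMap.coe_mk, AddHom.coe_mk, LinearMap.add_apply, Pi.add_apply, add_mul]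
    rw [Finset.sum_add_distrib]
  map_smul' c w := by
    refine LinearMap.ext fun v => ?_
    simp only [LinearMap.coe_mk, AddHom.coe_mk, LinearMap.smul_apply, Pi.smul_apply,
      smul_eq_mul, RingHom.id_apply, Finset.mul_sum]
    exact Finset.sum_congr rfl fun i _ => by ring

lemma single_eq_ite (r : ℕ) (k : Fin r) :
    (fun j => if k = j then (1 : ℂ) else 0) = Pi.single k 1 := by
  funext j
  rw [Pi.single_apply]
  exact if_congr eq_comm rfl rfl

lemma coordL_dualOf (r : ℕ) (w : Fin r → ℂ) : coordL r (dualOf r w) = w := by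
  funext i
  simp only [coordL, dualOf, LinearMap.coe_mk, AddHom.coe_mk]
  have : ∀ k : Fin r, w k * (Pi.single i 1 : Fin r → ℂ) k = if k = i then w k else 0 := by
    intro k
    rw [Pi.single_apply]
    by_cases h : k = i <;> simp [h]
  rw [Finset.sum_congr rfl fun k _ => this k, Finset.sum_ite_eq']
  simp

lemma dualOf_coordL (r : ℕ) (f : Module.Dual ℂ (Fin r → ℂ)) : dualOf r (coordL r f) = f := by
  refine LinearMap.ext fun v => ?_
  simp only [dualOf, coordL, LinearMap.coe_mk, AddHom.coe_mk]
  rw [LinearMap.pi_apply_eq_sum_univ f v]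
  exact Finset.sum_congr rfl fun i _ => by
    rw [single_eq_ite, smul_eq_mul, mul_comm]

lemma coordL_dualMap (r : ℕ) (M : Matrix (Fin r) (Fin r) ℂ)
    (f : Module.Dual ℂ (Fin r → ℂ)) :
    coordL r ((M.mulVecLin).dualMap f) = Mᵀ.mulVec (coordL r f) := by
  funext i
  simp only [coordL, LinearMap.coe_mk, AddHom.coe_mk, LinearMap.dualMap_apply,
    Matrix.mulVecLin_apply, Matrix.mulVec_single]
  have h1 : (fun k => M k i * 1) = fun k => M k i := by funext k; ring
  rw [MulOpposite.op_one, one_smul, show M.col i = fun k => M k i from rfl,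
    LinearMap.pi_apply_eq_sum_univ f (fun k => M k i)]
  simp only [Matrix.mulVec, dotProduct, Matrix.transpose_apply]
  exact Finset.sum_congr rfl fun k _ => by
    rw [single_eq_ite, smul_eq_mul]

/-- Key reduction: a matrix identity implies equivariance of `T = PMx ∘ coord`. -/
lemma keyred (r : ℕ) (α : ℂ) (M N : Matrix (Fin r) (Fin r) ℂ)
    (h : PMx r α * Mᵀ = N * PMx r α) (f : Module.Dual ℂ (Fin r → ℂ)) :
    (PMx r α).mulVecLin (coordL r ((M.mulVecLin).dualMap f))
      = N.mulVecLin ((PMx r α).mulVecLin (coordL r f)) := by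
  simp only [Matrix.mulVecLin_apply]
  rw [coordL_dualMap, Matrix.mulVec_mulVec, Matrix.mulVec_mulVec, h]

lemma neg_mulVecLin (r : ℕ) (M : Matrix (Fin r) (Fin r) ℂ) :
    (-M).mulVecLin = -(M.mulVecLin) := by
  apply LinearMap.ext
  intro v
  simp [Matrix.mulVecLin_apply, Matrix.neg_mulVec]

end Stmt2Aux

/-- For every `α ∈ ℂ` there is an isomorphism of `Ū`-modules `V_α^∨ ≅ V_{-α}`. -/
theorem stmt2 (r : ℕ) (hr : 2 ≤ r) (α : ℂ) :
    OpsIso (vermaDualOps r α) (vermaOps r (-α)) := by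
  classical
  have hr0 : r ≠ 0 := by omega
  -- the linear equivalence
  set T : Module.Dual ℂ (Fin r → ℂ) →ₗ[ℂ] (Fin r → ℂ) :=
    (PMx r α).mulVecLin ∘ₗ coordL r with hT
  set Tinv : (Fin r → ℂ) →ₗ[ℂ] Module.Dual ℂ (Fin r → ℂ) :=
    dualOf r ∘ₗ (QMx r α).mulVecLin with hTinv
  have h1 : T ∘ₗ Tinv = LinearMap.id := by
    apply LinearMap.ext
    intro w
    simp only [hT, hTinv, LinearMap.coe_comp, Function.comp_apply, LinearMap.id_apply,
      Matrix.mulVecLin_apply]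
    rw [coordL_dualOf, Matrix.mulVec_mulVec, PMx_mul_QMx, Matrix.one_mulVec]
  have h2 : Tinv ∘ₗ T = LinearMap.id := by
    apply LinearMap.ext
    intro f
    simp only [hT, hTinv, LinearMap.coe_comp, Function.comp_apply, LinearMap.id_apply,
      Matrix.mulVecLin_apply]
    rw [Matrix.mulVec_mulVec, QMx_mul_PMx, Matrix.one_mulVec, dualOf_coordL]
  refine ⟨LinearEquiv.ofLinear T Tinv h1 h2, ?_, ?_, ?_, ?_, ?_⟩
  · -- K
    intro f
    show T ((vermaDualOps r α).K f) = (vermaOps r (-α)).K (T f)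
    have hmat : PMx r α * (Matrix.diagonal fun i : Fin r => qc r (-wt r α (i : ℕ)))ᵀ
        = (Matrix.diagonal fun i : Fin r => qc r (wt r (-α) (i : ℕ))) * PMx r α := by
      ext j i
      rw [PMx_mul_entry, mul_PMx_entry]
      simp only [Matrix.diagonal_apply]
      by_cases h : i = Fin.rev j
      · subst h
        rw [if_pos rfl, if_pos (by simp)]
        have hw := wt_rev' r α (Fin.rev j)
        rw [Fin.rev_rev] at hw
        rw [hw]
        ring
      · rw [if_neg h, if_neg (fun hc => h (by rw [hc, Fin.rev_rev]))]
        ring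
    exact keyred r α _ _ hmat f
  · -- Kinv
    intro f
    show T ((vermaDualOps r α).Kinv f) = (vermaOps r (-α)).Kinv (T f)
    have hmat : PMx r α * (Matrix.diagonal fun i : Fin r => qc r (wt r α (i : ℕ)))ᵀ
        = (Matrix.diagonal fun i : Fin r => qc r (-wt r (-α) (i : ℕ))) * PMx r α := by
      ext j i
      rw [PMx_mul_entry, mul_PMx_entry]
      simp only [Matrix.diagonal_apply]
      by_cases h : i = Fin.rev j
      · subst h
        rw [if_pos rfl, if_pos (by simp)]
        have hw := wt_rev' r α (Fin.rev j)
        rw [Fin.rev_rev] at hw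
        rw [hw, neg_neg]
        ring
      · rw [if_neg h, if_neg (fun hc => h (by rw [hc, Fin.rev_rev]))]
        ring
    exact keyred r α _ _ hmat f
  · -- H
    intro f
    show T ((vermaDualOps r α).H f) = (vermaOps r (-α)).H (T f)
    have hop : (vermaDualOps r α).H
        = ((-(Matrix.diagonal fun i : Fin r => wt r α (i : ℕ))).mulVecLin).dualMap := by
      show (-(vermaOps r α).H).dualMap = _
      rw [neg_mulVecLin]
      rfl
    rw [hop]
    have hmat : PMx r α * (-(Matrix.diagonal fun i : Fin r => wt r α (i : ℕ)))ᵀ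
        = (Matrix.diagonal fun i : Fin r => wt r (-α) (i : ℕ)) * PMx r α := by
      ext j i
      rw [PMx_mul_entry, mul_PMx_entry]
      simp only [Matrix.neg_apply, Matrix.diagonal_apply]
      by_cases h : i = Fin.rev j
      · subst h
        rw [if_pos rfl, if_pos (by simp)]
        have hw := wt_rev' r α (Fin.rev j)
        rw [Fin.rev_rev] at hw
        rw [hw]
        ring
      · rw [if_neg h, if_neg (fun hc => h (by rw [hc, Fin.rev_rev]))]
        ring
    exact keyred r α _ _ hmat f
  · -- E
    intro f
    show T ((vermaDualOps r α).E f) = (vermaOps r (-α)).E (T f)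
    set ME : Matrix (Fin r) (Fin r) ℂ := Matrix.of fun i j : Fin r =>
      if (j : ℕ) = (i : ℕ) + 1 then cE r α (j : ℕ) else 0 with hME
    set MKi : Matrix (Fin r) (Fin r) ℂ :=
      Matrix.diagonal fun i : Fin r => qc r (-wt r α (i : ℕ)) with hMKi
    have hop : (vermaDualOps r α).E = ((-(ME * MKi)).mulVecLin).dualMap := by
      show (-((vermaOps r α).E * (vermaOps r α).Kinv)).dualMap = _
      rw [neg_mulVecLin, Matrix.mulVecLin_mul]
      rfl
    rw [hop]
    have hmat : PMx r α * (-(ME * MKi))ᵀ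
        = (Matrix.of fun i j : Fin r =>
            if (j : ℕ) = (i : ℕ) + 1 then cE r (-α) (j : ℕ) else 0) * PMx r α := by
      ext j i
      rw [PMx_mul_entry, mul_PMx_entry]
      have hprod : (-(ME * MKi)) i (Fin.rev j)
          = -((if ((Fin.rev j : Fin r) : ℕ) = (i : ℕ) + 1
                then cE r α ((Fin.rev j : Fin r) : ℕ) else 0)
              * qc r (-wt r α ((Fin.rev j : Fin r) : ℕ))) := by
        rw [Matrix.neg_apply, hME, hMKi, Matrix.mul_diagonal]
        rfl
      rw [hprod]
      simp only [Matrix.of_apply]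
      by_cases h1 : ((Fin.rev j : Fin r) : ℕ) = (i : ℕ) + 1
      · have hvj : ((Fin.rev j : Fin r) : ℕ) = r - ((j : ℕ) + 1) := Fin.val_rev j
        have hvi : ((Fin.rev i : Fin r) : ℕ) = r - ((i : ℕ) + 1) := Fin.val_rev i
        have hij : (i : ℕ) + (j : ℕ) + 2 = r := by
          have := j.isLt; have := i.isLt; omega
        have h2 : ((Fin.rev i : Fin r) : ℕ) = (j : ℕ) + 1 := by omega
        rw [if_pos h1, if_pos h2, h1, h2]
        rw [ccc_succ]
        rw [← cE_symm' r α hr0 hij]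
        have hq := qc_mul_neg' r (wt r α ((i : ℕ) + 1))
        linear_combination (ccc r α (i : ℕ) * cE r α ((i : ℕ) + 1)) * hq
      · have h2 : ¬ ((Fin.rev i : Fin r) : ℕ) = (j : ℕ) + 1 := by
          have hvj : ((Fin.rev j : Fin r) : ℕ) = r - ((j : ℕ) + 1) := Fin.val_rev j
          have hvi : ((Fin.rev i : Fin r) : ℕ) = r - ((i : ℕ) + 1) := Fin.val_rev i
          have := j.isLt; have := i.isLt
          omega
        rw [if_neg h1, if_neg h2]
        ring
    exact keyred r α _ _ hmat f
  · -- F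
    intro f
    show T ((vermaDualOps r α).F f) = (vermaOps r (-α)).F (T f)
    set MF : Matrix (Fin r) (Fin r) ℂ := Matrix.of fun i j : Fin r =>
      if (i : ℕ) = (j : ℕ) + 1 then (1 : ℂ) else 0 with hMF
    set MK : Matrix (Fin r) (Fin r) ℂ :=
      Matrix.diagonal fun i : Fin r => qc r (wt r α (i : ℕ)) with hMK
    have hop : (vermaDualOps r α).F = ((-(MK * MF)).mulVecLin).dualMap := by
      show (-((vermaOps r α).K * (vermaOps r α).F)).dualMap = _
      rw [neg_mulVecLin, Matrix.mulVecLin_mul]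
      rfl
    rw [hop]
    have hmat : PMx r α * (-(MK * MF))ᵀ
        = (Matrix.of fun i j : Fin r =>
            if (i : ℕ) = (j : ℕ) + 1 then (1 : ℂ) else 0) * PMx r α := by
      ext j i
      rw [PMx_mul_entry, mul_PMx_entry]
      have hprod : (-(MK * MF)) i (Fin.rev j)
          = -(qc r (wt r α (i : ℕ))
              * (if (i : ℕ) = ((Fin.rev j : Fin r) : ℕ) + 1 then (1 : ℂ) else 0)) := by
        rw [Matrix.neg_apply, hMK, hMF, Matrix.diagonal_mul]
        rfl
      rw [hprod]
      simp only [Matrix.of_apply]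
      have hvj : ((Fin.rev j : Fin r) : ℕ) = r - ((j : ℕ) + 1) := Fin.val_rev j
      have hvi : ((Fin.rev i : Fin r) : ℕ) = r - ((i : ℕ) + 1) := Fin.val_rev i
      by_cases h1 : (i : ℕ) = ((Fin.rev j : Fin r) : ℕ) + 1
      · have h2 : (j : ℕ) = ((Fin.rev i : Fin r) : ℕ) + 1 := by
          have := j.isLt; have := i.isLt; omega
        rw [if_pos h1, if_pos h2]
        have hcc : ccc r α (i : ℕ)
            = ccc r α ((Fin.rev j : Fin r) : ℕ)
              * -qc r (wt r α (((Fin.rev j : Fin r) : ℕ) + 1)) := by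
          rw [← ccc_succ, ← h1]
        rw [hcc, ← h1]
        ring
      · have h2 : ¬ (j : ℕ) = ((Fin.rev i : Fin r) : ℕ) + 1 := by
          have := j.isLt; have := i.isLt; omega
        rw [if_neg h1, if_neg h2]
        ring
    exact keyred r α _ _ hmat f


end Unrolled
end
end

section
/- For α ∈ ℂ, the Verma module V_α is a simple Ū-module if and only if α ∉ ℤ∖rℤ. -/
noncomputable section

open scoped TensorProduct

namespace Unrolled

variable {V W U : Type} [AddCommGroup V] [Module ℂ V] [AddCommGroup W] [Module ℂ W]
  [AddCommGroup U] [Module ℂ U]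

/-! ### Auxiliary lemmas for `stmt3` -/

lemma qbrk_eq_zero_iff' {r : ℕ} (hr : 0 < r) (z : ℂ) :
    qbrk r z = 0 ↔ ∃ n : ℤ, z = (n : ℂ) * r := by
  have hr' : (r : ℂ) ≠ 0 := Nat.cast_ne_zero.mpr hr.ne'
  have hπ : (Real.pi : ℂ) ≠ 0 := by exact_mod_cast Real.pi_ne_zero
  have h2 : (2 * (Real.pi : ℂ) * Complex.I) ≠ 0 := by
    simp [hπ, Complex.I_ne_zero]
  unfold qbrk qc
  rw [sub_eq_zero, Complex.exp_eq_exp_iff_exists_int]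
  constructor
  · rintro ⟨n, hn⟩
    field_simp at hn
    exact ⟨n, mul_left_cancel₀ h2 (by linear_combination ((Real.pi : ℂ) * Complex.I) * hn)⟩
  · rintro ⟨n, rfl⟩
    exact ⟨n, by field_simp; ring⟩

lemma int_not_in' (i : ℕ) (r : ℕ) (h1 : 1 ≤ i) (h2 : i < r) (n : ℤ) (hn : (i:ℂ) = n * r) :
    False := by
  have h : (i : ℤ) = n * r := by exact_mod_cast hn
  rcases le_or_gt n 0 with h' | h'
  · have := mul_le_mul_of_nonneg_right h' (show (0:ℤ) ≤ r by positivity)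
    simp at this
    omega
  · have : (r : ℤ) ≤ n * r := le_mul_of_one_le_left (by positivity) h'
    omega

lemma qbrk_nat_ne {r : ℕ} (i : ℕ) (h1 : 1 ≤ i) (h2 : i < r) : qbrk r i ≠ 0 := by
  intro h
  rw [qbrk_eq_zero_iff' (by omega)] at h
  obtain ⟨n, hn⟩ := h
  exact int_not_in' i r h1 h2 n hn

lemma qbrk_one_ne {r : ℕ} (hr : 2 ≤ r) : qbrk r 1 ≠ 0 := by
  have := qbrk_nat_ne (r := r) 1 le_rfl (by omega)
  simpa using this

lemma cE_eq_zero_iff {r : ℕ} (hr : 2 ≤ r) (α : ℂ) (i : ℕ) (h1 : 1 ≤ i) (h2 : i < r) :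
    cE r α i = 0 ↔ qbrk r ((i : ℂ) - α) = 0 := by
  unfold cE
  rw [div_eq_zero_iff, mul_eq_zero]
  have ha := qbrk_nat_ne (r := r) i h1 h2
  have hb := pow_ne_zero 2 (qbrk_one_ne hr)
  tauto

lemma E_apply (r : ℕ) (α : ℂ) (x : Fin r → ℂ) (i : Fin r) :
    (vermaOps r α).E x i
      = ∑ j : Fin r, (if (j : ℕ) = (i : ℕ) + 1 then cE r α (j : ℕ) else 0) * x j := by
  simp [vermaOps, Matrix.mulVecLin_apply, Matrix.mulVec, dotProduct]

lemma F_apply (r : ℕ) (α : ℂ) (x : Fin r → ℂ) (i : Fin r) :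
    (vermaOps r α).F x i
      = ∑ j : Fin r, (if (i : ℕ) = (j : ℕ) + 1 then (1:ℂ) else 0) * x j := by
  simp [vermaOps, Matrix.mulVecLin_apply, Matrix.mulVec, dotProduct]

lemma K_apply' (r : ℕ) (α : ℂ) (x : Fin r → ℂ) (i : Fin r) :
    (vermaOps r α).K x i = qc r (wt r α (i : ℕ)) * x i := by
  simp [vermaOps, Matrix.mulVecLin_apply, Matrix.mulVec_diagonal]

lemma Kinv_apply' (r : ℕ) (α : ℂ) (x : Fin r → ℂ) (i : Fin r) :
    (vermaOps r α).Kinv x i = qc r (-wt r α (i : ℕ)) * x i := by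
  simp [vermaOps, Matrix.mulVecLin_apply, Matrix.mulVec_diagonal]

lemma H_apply' (r : ℕ) (α : ℂ) (x : Fin r → ℂ) (i : Fin r) :
    (vermaOps r α).H x i = wt r α (i : ℕ) * x i := by
  simp [vermaOps, Matrix.mulVecLin_apply, Matrix.mulVec_diagonal]

/-- If some coefficient `cE r α i₀` vanishes (`1 ≤ i₀ < r`), the Verma module is not simple. -/
lemma not_simple_of_cE_zero {r : ℕ} (hr : 2 ≤ r) (α : ℂ) (i₀ : ℕ) (h1 : 1 ≤ i₀)
    (h2 : i₀ < r) (h0 : cE r α i₀ = 0) : ¬ (vermaOps r α).IsSimple := by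
  rintro ⟨-, hsimp⟩
  set p : Submodule ℂ (Fin r → ℂ) :=
    { carrier := {x | ∀ k : Fin r, (k : ℕ) < i₀ → x k = 0}
      add_mem' := fun ha hb k hk => by
        simp only [Pi.add_apply, ha k hk, hb k hk, add_zero]
      zero_mem' := fun k hk => rfl
      smul_mem' := fun c x hx k hk => by
        simp only [Pi.smul_apply, hx k hk, smul_zero] } with hp
  have hmem : ∀ x : Fin r → ℂ, x ∈ p ↔ ∀ k : Fin r, (k : ℕ) < i₀ → x k = 0 :=
    fun x => Iff.rfl
  have hinv : (vermaOps r α).Invariant p := by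
    refine ⟨?_, ?_, ?_, ?_, ?_⟩
    · intro v hv k hk
      rw [K_apply', hv k hk, mul_zero]
    · intro v hv k hk
      rw [Kinv_apply', hv k hk, mul_zero]
    · intro v hv k hk
      rw [H_apply', hv k hk, mul_zero]
    · intro v hv k hk
      rw [E_apply]
      refine Finset.sum_eq_zero fun j _ => ?_
      by_cases hj : (j : ℕ) = (k : ℕ) + 1
      · rcases Nat.lt_or_ge ((k : ℕ) + 1) i₀ with h | h
        · rw [hv j (by omega), mul_zero]
        · have : (j : ℕ) = i₀ := by omega
          rw [if_pos hj, this, h0, zero_mul]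
      · rw [if_neg hj, zero_mul]
    · intro v hv k hk
      rw [F_apply]
      refine Finset.sum_eq_zero fun j _ => ?_
      by_cases hj : (k : ℕ) = (j : ℕ) + 1
      · rw [hv j (by omega), mul_zero]
      · rw [if_neg hj, zero_mul]
  rcases hsimp p hinv with hbot | htop
  · have : Pi.single (⟨i₀, h2⟩ : Fin r) (1:ℂ) ∈ p := by
      intro k hk
      apply Pi.single_eq_of_ne
      intro he
      rw [he] at hk
      exact absurd hk (lt_irrefl _)
    rw [hbot] at this
    have := congrFun ((Submodule.mem_bot ℂ).mp this) ⟨i₀, h2⟩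
    simp at this
  · have h0r : (0 : ℕ) < r := by omega
    have : Pi.single (⟨0, h0r⟩ : Fin r) (1:ℂ) ∈ p := htop ▸ Submodule.mem_top
    have := this ⟨0, h0r⟩ h1
    simp at this

/-- If all coefficients `cE r α i` (`1 ≤ i < r`) are nonzero, the Verma module is simple. -/
lemma simple_of_cE_ne_zero {r : ℕ} (hr : 2 ≤ r) (α : ℂ)
    (hC : ∀ i : ℕ, 1 ≤ i → i < r → cE r α i ≠ 0) : (vermaOps r α).IsSimple := by
  have h0r : (0 : ℕ) < r := by omega
  constructor
  · refine ⟨Pi.single (⟨0, h0r⟩ : Fin r) 1, fun h => ?_⟩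
    have := congrFun h ⟨0, h0r⟩
    simp at this
  · intro p hp
    by_cases hbot : p = ⊥
    · exact Or.inl hbot
    right
    obtain ⟨x, hxp, hx0⟩ := Submodule.exists_mem_ne_zero_of_ne_bot hbot
    -- Step 1: `e₀ ∈ p`.
    have key : ∀ j : ℕ, ∀ x : Fin r → ℂ, x ∈ p → x ≠ 0 →
        (∀ i : Fin r, j < (i : ℕ) → x i = 0) →
        Pi.single (⟨0, h0r⟩ : Fin r) (1:ℂ) ∈ p := by
      intro j
      induction j with
      | zero =>
        intro x hxp hx0 hbd
        have hx00 : x ⟨0, h0r⟩ ≠ 0 := by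
          intro h
          apply hx0
          funext i
          rcases Nat.eq_zero_or_pos (i : ℕ) with h' | h'
          · have : i = ⟨0, h0r⟩ := Fin.ext h'
            rw [this, h]
            rfl
          · exact hbd i h'
        have : Pi.single (⟨0, h0r⟩ : Fin r) (1:ℂ) = (x ⟨0, h0r⟩)⁻¹ • x := by
          funext i
          rcases Nat.eq_zero_or_pos (i : ℕ) with h' | h'
          · have hi : i = ⟨0, h0r⟩ := Fin.ext h'
            rw [hi, Pi.single_eq_same]
            simp [inv_mul_cancel₀ hx00]
          · rw [Pi.single_eq_of_ne (by intro he; rw [he] at h'; simp at h')]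
            simp [hbd i h']
        rw [this]
        exact p.smul_mem _ hxp
      | succ j ih =>
        intro x hxp hx0 hbd
        by_cases hall : ∀ i : Fin r, j < (i : ℕ) → x i = 0
        · exact ih x hxp hx0 hall
        push_neg at hall
        obtain ⟨i, hji, hxi⟩ := hall
        have hie : (i : ℕ) = j + 1 := by
          by_contra hne
          exact hxi (hbd i (by omega))
        have hjr : j < r := by have := i.isLt; omega
        set y := (vermaOps r α).E x with hy
        have hyp : y ∈ p := hp.2.2.2.1 x hxp
        have hybd : ∀ k : Fin r, j < (k : ℕ) → y k = 0 := by
          intro k hk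
          rw [hy, E_apply]
          refine Finset.sum_eq_zero fun l _ => ?_
          by_cases hl : (l : ℕ) = (k : ℕ) + 1
          · rw [hbd l (by omega), mul_zero]
          · rw [if_neg hl, zero_mul]
        have hyj : y ⟨j, hjr⟩ = cE r α (j + 1) * x i := by
          rw [hy, E_apply]
          rw [Finset.sum_eq_single i]
          · rw [if_pos hie, hie]
          · intro l _ hl
            rw [if_neg, zero_mul]
            intro he
            have hjj : ((⟨j, hjr⟩ : Fin r) : ℕ) = j := rfl
            rw [hjj] at he
            exact hl (Fin.ext (by omega))
          · intro h
            exact absurd (Finset.mem_univ i) h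
        have hy0 : y ≠ 0 := by
          intro h
          rw [h] at hyj
          exact (mul_ne_zero (hC (j+1) (by omega) (by omega)) hxi) hyj.symm
        exact ih y hyp hy0 hybd
    have he0 : Pi.single (⟨0, h0r⟩ : Fin r) (1:ℂ) ∈ p := by
      refine key (r - 1) x hxp hx0 fun i hi => ?_
      have := i.isLt
      omega
    -- Step 2: all basis vectors lie in `p`.
    have hsingles : ∀ m : ℕ, ∀ hm : m < r, Pi.single (⟨m, hm⟩ : Fin r) (1:ℂ) ∈ p := by
      intro m
      induction m with
      | zero => intro hm; exact he0
      | succ m ih =>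
        intro hm
        have hmr : m < r := by omega
        have hmem := hp.2.2.2.2 _ (ih hmr)
        have hFe : (vermaOps r α).F (Pi.single (⟨m, hmr⟩ : Fin r) (1:ℂ))
            = Pi.single (⟨m + 1, hm⟩ : Fin r) (1:ℂ) := by
          funext k
          rw [F_apply]
          rw [Finset.sum_eq_single (⟨m, hmr⟩ : Fin r)]
          · rw [Pi.single_eq_same, mul_one]
            by_cases hk : (k : ℕ) = m + 1
            · rw [if_pos hk]
              have : k = (⟨m + 1, hm⟩ : Fin r) := Fin.ext hk
              rw [this, Pi.single_eq_same]
            · rw [if_neg hk, Pi.single_eq_of_ne (fun he => hk (by rw [he]))]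
          · intro l _ hl
            rw [Pi.single_eq_of_ne hl, mul_zero]
          · intro h
            exact absurd (Finset.mem_univ _) h
        rwa [hFe] at hmem
    -- Step 3: `p = ⊤`.
    rw [Submodule.eq_top_iff']
    intro v
    have hv : v = ∑ k : Fin r, v k • (Pi.single k (1:ℂ) : Fin r → ℂ) := by
      funext i
      rw [Fintype.sum_apply]
      rw [Finset.sum_eq_single i]
      · simp
      · intro l _ hl
        simp [Pi.single_eq_of_ne (Ne.symm hl)]
      · intro h
        exact absurd (Finset.mem_univ _) h
    rw [hv]
    refine Submodule.sum_mem p fun k _ => Submodule.smul_mem p _ ?_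
    have := hsingles (k : ℕ) k.isLt
    simpa using this

/-- The Verma module `V_α` is simple if and only if `α ∉ ℤ ∖ rℤ`. -/
theorem stmt3 (r : ℕ) (hr : 2 ≤ r) (α : ℂ) :
    (vermaOps r α).IsSimple ↔
      ¬((∃ n : ℤ, α = (n : ℂ)) ∧ ¬∃ m : ℤ, α = (r : ℂ) * m) := by
  constructor
  · intro hs
    rintro ⟨⟨n, rfl⟩, hm⟩
    have hrZ : (0 : ℤ) < (r : ℤ) := by exact_mod_cast (by omega : 0 < r)
    have hdm := Int.mul_ediv_add_emod n (r : ℤ)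
    have hge : 0 ≤ n % (r : ℤ) := Int.emod_nonneg n (by omega)
    have hlt : n % (r : ℤ) < r := Int.emod_lt_of_pos n hrZ
    have hmod0 : n % (r : ℤ) ≠ 0 := by
      intro h
      refine hm ⟨n / (r : ℤ), ?_⟩
      have hz : n = (r : ℤ) * (n / (r : ℤ)) := by omega
      exact_mod_cast congrArg (Int.cast : ℤ → ℂ) hz
    set i₀ : ℕ := (n % (r : ℤ)).toNat with hi₀
    have ht : (i₀ : ℤ) = n % (r : ℤ) := Int.toNat_of_nonneg hge
    have h1 : 1 ≤ i₀ := by omega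
    have h2 : i₀ < r := by omega
    have hcE : cE r ((n : ℤ) : ℂ) i₀ = 0 := by
      rw [cE_eq_zero_iff hr _ i₀ h1 h2, qbrk_eq_zero_iff' (by omega)]
      refine ⟨-(n / (r : ℤ)), ?_⟩
      have hz : (i₀ : ℤ) - n = -(n / (r : ℤ)) * r := by linear_combination ht + hdm
      push_cast
      exact_mod_cast congrArg (Int.cast : ℤ → ℂ) hz
    exact not_simple_of_cE_zero hr _ i₀ h1 h2 hcE hs
  · intro hgood
    refine simple_of_cE_ne_zero hr α fun i h1 h2 hcE => ?_
    rw [cE_eq_zero_iff hr α i h1 h2, qbrk_eq_zero_iff' (by omega)] at hcE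
    obtain ⟨k, hk⟩ := hcE
    apply hgood
    constructor
    · exact ⟨(i : ℤ) - k * r, by push_cast; linear_combination -hk⟩
    · rintro ⟨m, hm⟩
      apply int_not_in' i r h1 h2 (k + m)
      push_cast
      linear_combination hk + hm

end Unrolled
end
end
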